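/- Let y₁…yₙ = z₁…zₘ be a word equation and Lang a feasible language assignment (each Lang(x) nonempty) in which all words of Lang(x) have the same length ℓ_x. If Lang(y₁)···Lang(yₙ) = Lang(z₁)···Lang(zₘ), then the equation has a solution ν with ν(x) ∈ Lang(x) for every variable x. -/

import Mathlib

section Aux

variable {Γ : Type*} (r : Γ → Γ → Prop)

/-- `m` is a least element of `L` w.r.t. lexicographic order. -/
def IsLexLeast (L : Language Γ) (m : List Γ) : Prop :=
  m ∈ L ∧ ∀ w ∈ L, ¬ List.Lex r w m

/-- Every nonempty language of fixed-length words has a lex-least element,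
when the alphabet relation is well-founded. -/
theorem exists_lexLeast (hwf : WellFounded r) :
    ∀ (n : ℕ) (L : Language Γ), (∀ w ∈ L, w.length = n) → (∃ w, w ∈ L) →
      ∃ m, IsLexLeast r L m := by
  intro n
  induction n with
  | zero =>
    intro L hL ⟨w, hw⟩
    have hwnil : w = [] := List.length_eq_zero_iff.mp (hL w hw)
    exact ⟨[], hwnil ▸ hw, fun v _ h => List.not_lex_nil h⟩
  | succ n ih =>
    intro L hL ⟨w, hw⟩
    -- set of heads
    set H : Set Γ := {a | ∃ t, a :: t ∈ L} with hH
    have hHne : H.Nonempty := by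
      cases w with
      | nil => exact absurd (hL [] hw) (by simp)
      | cons a t => exact ⟨a, t, hw⟩
    obtain ⟨a₀, ha₀, hmin⟩ := hwf.has_min H hHne
    obtain ⟨t, ht⟩ := ha₀
    -- tails after a₀
    set T : Language Γ := {u | a₀ :: u ∈ L} with hT
    have hTlen : ∀ u ∈ T, u.length = n := by
      intro u hu
      have := hL (a₀ :: u) hu
      simpa using this
    obtain ⟨t₀, ht₀, ht₀min⟩ := ih T hTlen ⟨t, ht⟩
    refine ⟨a₀ :: t₀, ht₀, ?_⟩
    intro v hv hlex
    cases v with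
    | nil => exact absurd (hL [] hv) (by simp)
    | cons a u =>
      cases hlex with
      | rel h => exact hmin a ⟨u, hv⟩ h
      | cons h => exact ht₀min u hv h
end Aux

/-- Splitting a lex comparison of appended lists with equal-length first parts. -/
theorem lex_append_split {Γ : Type*} {r : Γ → Γ → Prop} :
    ∀ (u u' v v' : List Γ), u.length = u'.length →
      List.Lex r (u ++ v) (u' ++ v') → List.Lex r u u' ∨ (u = u' ∧ List.Lex r v v')
  | [], [], v, v', _, h => Or.inr ⟨rfl, h⟩
  | [], _ :: _, _, _, h, _ => by simp at h
  | _ :: _, [], _, _, h, _ => by simp at h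
  | a :: u, a' :: u', v, v', hlen, h => by
    cases h with
    | rel h => exact Or.inl (List.Lex.rel h)
    | cons h =>
      rcases lex_append_split u u' v v' (by simpa using hlen) h with h' | ⟨rfl, h'⟩
      · exact Or.inl (List.Lex.cons h')
      · exact Or.inr ⟨rfl, h'⟩

/-- Lex-least elements multiply. -/
theorem IsLexLeast.mul {Γ : Type*} {r : Γ → Γ → Prop} {L₁ L₂ : Language Γ} {m₁ m₂ : List Γ}
    {n : ℕ} (hlen : ∀ w ∈ L₁, w.length = n)
    (h₁ : IsLexLeast r L₁ m₁) (h₂ : IsLexLeast r L₂ m₂) :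
    IsLexLeast r (L₁ * L₂) (m₁ ++ m₂) := by
  refine ⟨Language.append_mem_mul h₁.1 h₂.1, ?_⟩
  intro w hw hlex
  rw [Language.mem_mul] at hw
  obtain ⟨u, hu, v, hv, rfl⟩ := hw
  have huml : u.length = m₁.length := by rw [hlen u hu, hlen m₁ h₁.1]
  rcases lex_append_split u m₁ v m₂ huml hlex with h | ⟨rfl, h⟩
  · exact h₁.2 u hu h
  · exact h₂.2 v hv h

/-- Let `y₁…yₙ = z₁…zₘ` be a word equation and `Lang` a feasible language
assignment in which all words of `Lang x` have the same length `ℓ x`.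
If `Lang(y₁)···Lang(yₙ) = Lang(z₁)···Lang(zₘ)`, then the equation has
a solution `ν` with `ν x ∈ Lang x` for every variable `x`. -/
theorem solution_of_stable_fixed_lengths {X Γ : Type*}
    (ℓ : X → ℕ) (ys zs : List X) (Lang : X → Language Γ)
    (hne : ∀ x, ∃ w, w ∈ Lang x)
    (hlen : ∀ x, ∀ w ∈ Lang x, w.length = ℓ x)
    (hstable : (ys.map Lang).prod = (zs.map Lang).prod) :
    ∃ ν : X → List Γ, (∀ x, ν x ∈ Lang x) ∧
      (ys.map ν).flatten = (zs.map ν).flatten := by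
  classical
  set r : Γ → Γ → Prop := WellOrderingRel with hr
  have hwf : WellFounded r := (WellOrderingRel.isWellOrder).wf
  -- choose the lex-least word in each language
  have hch : ∀ x, ∃ m, IsLexLeast r (Lang x) m :=
    fun x => exists_lexLeast r hwf (ℓ x) (Lang x) (hlen x) (hne x)
  choose ν hν using hch
  refine ⟨ν, fun x => (hν x).1, ?_⟩
  -- the flatten over any list of variables is the lex-least of the product
  have key : ∀ xs : List X, IsLexLeast r (xs.map Lang).prod (xs.map ν).flatten := by
    intro xs
    induction xs with
    | nil =>
      refine ⟨by simp [Language.nil_mem_one], ?_⟩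
      intro w hw hlex
      simp only [List.map_nil, List.prod_nil] at hw
      rw [Language.mem_one] at hw
      subst hw
      exact List.not_lex_nil hlex
    | cons x xs ih =>
      simp only [List.map_cons, List.prod_cons, List.flatten_cons]
      exact IsLexLeast.mul (hlen x) (hν x) ih
  -- least elements are unique
  have h₁ := key ys
  have h₂ := key zs
  rw [hstable] at h₁
  by_contra hne'
  rcases trichotomous_of (List.Lex r) (ys.map ν).flatten (zs.map ν).flatten with
    h | h | h
  · exact h₂.2 _ h₁.1 h
  · exact hne' h
  · exact h₁.2 _ h₂.1 h
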